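/- (Theorem 2, single cell) Let n, l be positive natural numbers, A an n×n real matrix, B an n×1 real matrix, K = [k₁, …, k_n] a 1×n real matrix, D an n×l real matrix. Let φ : ℝ → ℝ be an odd function, let 0 ≤ ρ₀ ≤ ρ₁, τ > 0, χ > 0, γ > 0, f̄ ≥ 0, and let P be a symmetric n×n real matrix with P − γI positive definite, such that for ρ ∈ {ρ₀, ρ₁} the block matrix [[(A+ρBK)ᵀP + P(A+ρBK) + τP, PD], [DᵀP, −χI_l]] is negative definite. Let f : ℝ → ℝˡ satisfy |f(t)|² ≤ f̄ for all t ≥ 0, and let x : ℝ → ℝⁿ be differentiable with x′(t) = A x(t) + B·φ(Σ_{j=1}^n k_j x_j(t)) + D f(t) for all t ≥ 0. Assume that for all t ≥ 0, writing w(t) = Σ_{j=1}^n k_j x_j(t), one has ρ₀·w(t)² ≤ φ(w(t))·w(t) ≤ ρ₁·w(t)². Then V(t) = x(t)ᵀPx(t) satisfies V(t) ≤ χf̄/τ + (‖P‖·|x(0)|² + χf̄/τ)·e^{−τt} for all t ≥ 0, and limsup_{t→∞} |x(t)| ≤ √(χ f̄/(γτ)). -/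

import Mathlib

open Matrix Filter

/-- A real matrix is negative definite (as a quadratic form) if `zᵀ M z < 0`
for every nonzero vector `z`. -/
def NegDefQF {m : Type*} [Fintype m] (M : Matrix m m ℝ) : Prop :=
  ∀ z : m → ℝ, z ≠ 0 → z ⬝ᵥ M *ᵥ z < 0

/-- Euclidean norm of a vector in `ℝⁿ`. -/
noncomputable def enorm {n : ℕ} (v : Fin n → ℝ) : ℝ :=
  Real.sqrt (∑ i, v i ^ 2)

/-- Operator norm (w.r.t. the Euclidean norm) of a square real matrix. -/
noncomputable def opNorm {n : ℕ} (P : Matrix (Fin n) (Fin n) ℝ) : ℝ :=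
  ‖LinearMap.toContinuousLinearMap (Matrix.toEuclideanLin P)‖

lemma qf_hasDerivAt {n : ℕ} (P : Matrix (Fin n) (Fin n) ℝ) {x : ℝ → Fin n → ℝ}
    {v : Fin n → ℝ} {t : ℝ} (hx : HasDerivAt x v t) :
    HasDerivAt (fun s => x s ⬝ᵥ P *ᵥ x s)
      (v ⬝ᵥ P *ᵥ x t + x t ⬝ᵥ P *ᵥ v) t := by
  have hxi : ∀ i, HasDerivAt (fun s => x s i) (v i) t := hasDerivAt_pi.1 hx
  have h : HasDerivAt (fun s => ∑ i, ∑ j, x s i * (P i j * x s j))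
      (∑ i, ∑ j, (v i * (P i j * x t j) + x t i * (P i j * v j))) t := by
    apply HasDerivAt.fun_sum; intro i _
    apply HasDerivAt.fun_sum; intro j _
    exact (hxi i).mul ((hxi j).const_mul (P i j))
  convert h using 1
  · funext s; simp [dotProduct, mulVec, Finset.mul_sum]
  · simp [dotProduct, mulVec, Finset.mul_sum, Finset.sum_add_distrib]

lemma qf_block {n l : ℕ} (A : Matrix (Fin n) (Fin n) ℝ) (B : Matrix (Fin n) (Fin 1) ℝ)
    (K : Matrix (Fin 1) (Fin n) ℝ) (D : Matrix (Fin n) (Fin l) ℝ)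
    (P : Matrix (Fin n) (Fin n) ℝ) (τ χ ρ : ℝ) (ξ : Fin n → ℝ) (u : Fin l → ℝ) :
    (Sum.elim ξ u) ⬝ᵥ (Matrix.fromBlocks
        ((A + ρ • (B * K))ᵀ * P + P * (A + ρ • (B * K)) + τ • P)
        (P * D) (Dᵀ * P) ((-χ) • (1 : Matrix (Fin l) (Fin l) ℝ))) *ᵥ (Sum.elim ξ u)
    = ((A + ρ • (B * K)) *ᵥ ξ + D *ᵥ u) ⬝ᵥ (P *ᵥ ξ)
      + ξ ⬝ᵥ P *ᵥ ((A + ρ • (B * K)) *ᵥ ξ + D *ᵥ u)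
      + τ * (ξ ⬝ᵥ P *ᵥ ξ) - χ * (u ⬝ᵥ u) := by
  set C := A + ρ • (B * K)
  rw [fromBlocks_mulVec, dotProduct_block]
  simp only [Sum.elim_comp_inl, Sum.elim_comp_inr, Sum.elim_inl, Sum.elim_inr]
  have h1 : ξ ⬝ᵥ Cᵀ *ᵥ (P *ᵥ ξ) = (C *ᵥ ξ) ⬝ᵥ (P *ᵥ ξ) := by
    rw [dotProduct_mulVec, vecMul_transpose]
  have h2 : u ⬝ᵥ Dᵀ *ᵥ (P *ᵥ ξ) = (D *ᵥ u) ⬝ᵥ (P *ᵥ ξ) := by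
    rw [dotProduct_mulVec, vecMul_transpose]
  simp only [add_mulVec, smul_mulVec, mulVec_add, dotProduct_add, add_dotProduct,
    smul_dotProduct, dotProduct_smul, ← mulVec_mulVec, smul_eq_mul,
    neg_smul, neg_mulVec, one_mulVec, dotProduct_neg, h1, h2]
  ring

lemma enorm_eq {n : ℕ} (v : Fin n → ℝ) :
    _root_.enorm v = ‖(WithLp.equiv 2 (Fin n → ℝ)).symm v‖ := by
  rw [EuclideanSpace.norm_eq, _root_.enorm]
  congr 1
  apply Finset.sum_congr rfl
  intro i _
  rw [Real.norm_eq_abs, sq_abs]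
  rfl

lemma qf_le_opNorm {n : ℕ} (P : Matrix (Fin n) (Fin n) ℝ) (ξ : Fin n → ℝ) :
    ξ ⬝ᵥ P *ᵥ ξ ≤ opNorm P * _root_.enorm ξ ^ 2 := by
  set v : EuclideanSpace ℝ (Fin n) := (WithLp.equiv 2 (Fin n → ℝ)).symm ξ
  have h1 : ξ ⬝ᵥ P *ᵥ ξ
      = inner ℝ v ((LinearMap.toContinuousLinearMap (Matrix.toEuclideanLin P)) v) := by
    simp [v, LinearMap.coe_toContinuousLinearMap', Matrix.toEuclideanLin_apply,
      dotProduct, PiLp.inner_apply, RCLike.inner_apply]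
    exact Finset.sum_congr rfl fun i _ => mul_comm _ _
  rw [h1, enorm_eq]
  calc inner ℝ v ((LinearMap.toContinuousLinearMap (Matrix.toEuclideanLin P)) v)
      ≤ ‖v‖ * ‖(LinearMap.toContinuousLinearMap (Matrix.toEuclideanLin P)) v‖ :=
        real_inner_le_norm _ _
    _ ≤ ‖v‖ * (opNorm P * ‖v‖) := by
        exact mul_le_mul_of_nonneg_left (ContinuousLinearMap.le_opNorm _ _) (norm_nonneg _)
    _ = opNorm P * ‖v‖ ^ 2 := by ring

set_option maxHeartbeats 1000000 in
theorem stmt_9 (n l : ℕ) (hn : 0 < n) (hl : 0 < l)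
    (A : Matrix (Fin n) (Fin n) ℝ) (B : Matrix (Fin n) (Fin 1) ℝ)
    (K : Matrix (Fin 1) (Fin n) ℝ) (D : Matrix (Fin n) (Fin l) ℝ)
    (φ : ℝ → ℝ) (hodd : ∀ s, φ (-s) = -φ s)
    (ρ₀ ρ₁ τ χ γ fbar : ℝ) (hρ₀ : 0 ≤ ρ₀) (hρ : ρ₀ ≤ ρ₁)
    (hτ : 0 < τ) (hχ : 0 < χ) (hγ : 0 < γ) (hf : 0 ≤ fbar)
    (P : Matrix (Fin n) (Fin n) ℝ) (hPsymm : P.IsSymm)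
    (hPγ : ∀ z : Fin n → ℝ, z ≠ 0 →
      0 < z ⬝ᵥ (P - γ • (1 : Matrix (Fin n) (Fin n) ℝ)) *ᵥ z)
    (hvertex : ∀ ρ : ℝ, ρ = ρ₀ ∨ ρ = ρ₁ →
      NegDefQF (Matrix.fromBlocks
        ((A + ρ • (B * K))ᵀ * P + P * (A + ρ • (B * K)) + τ • P)
        (P * D) (Dᵀ * P) ((-χ) • (1 : Matrix (Fin l) (Fin l) ℝ))))
    (f : ℝ → Fin l → ℝ) (hfb : ∀ t ≥ (0 : ℝ), ∑ i, (f t i) ^ 2 ≤ fbar)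
    (x : ℝ → Fin n → ℝ)
    (hx : ∀ t ≥ (0 : ℝ), HasDerivAt x
      (A *ᵥ x t + (fun i => B i 0 * φ (∑ j, K 0 j * x t j)) + D *ᵥ f t) t)
    (hsector : ∀ t ≥ (0 : ℝ),
      ρ₀ * (∑ j, K 0 j * x t j) ^ 2 ≤ φ (∑ j, K 0 j * x t j) * (∑ j, K 0 j * x t j) ∧
      φ (∑ j, K 0 j * x t j) * (∑ j, K 0 j * x t j) ≤ ρ₁ * (∑ j, K 0 j * x t j) ^ 2) :
    (∀ t ≥ (0 : ℝ),
      x t ⬝ᵥ P *ᵥ x t ≤ χ * fbar / τ +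
        (opNorm P * (_root_.enorm (x 0)) ^ 2 + χ * fbar / τ) * Real.exp (-τ * t)) ∧
    limsup (fun t => _root_.enorm (x t)) atTop ≤ Real.sqrt (χ * fbar / (γ * τ)) := by
  set V : ℝ → ℝ := fun t => x t ⬝ᵥ P *ᵥ x t with hV
  set xd : ℝ → Fin n → ℝ := fun t =>
    A *ᵥ x t + (fun i => B i 0 * φ (∑ j, K 0 j * x t j)) + D *ᵥ f t with hxd
  have hφ0 : φ 0 = 0 := by have := hodd 0; simp at this; linarith
  -- key differential inequality
  have hkey : ∀ t ≥ (0 : ℝ),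
      xd t ⬝ᵥ P *ᵥ x t + x t ⬝ᵥ P *ᵥ xd t + τ * V t ≤ χ * fbar := by
    intro t ht
    set ξ := x t
    set u := f t
    set w : ℝ := ∑ j, K 0 j * x t j with hw
    -- choose the slope ρ
    obtain ⟨ρ, hρl, hρr, hφw⟩ : ∃ ρ, ρ₀ ≤ ρ ∧ ρ ≤ ρ₁ ∧ φ w = ρ * w := by
      by_cases hw0 : w = 0
      · exact ⟨ρ₀, le_refl _, hρ, by rw [hw0, hφ0, mul_zero]⟩
      · refine ⟨φ w / w, ?_, ?_, by field_simp⟩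
        · have h := (hsector t ht).1
          have hw2 : 0 < w ^ 2 := by positivity
          rw [← mul_le_mul_iff_of_pos_right hw2]
          calc ρ₀ * w ^ 2 ≤ φ w * w := h
            _ = φ w / w * w ^ 2 := by field_simp
        · have h := (hsector t ht).2
          have hw2 : 0 < w ^ 2 := by positivity
          rw [← mul_le_mul_iff_of_pos_right hw2]
          calc φ w / w * w ^ 2 = φ w * w := by field_simp
            _ ≤ ρ₁ * w ^ 2 := h
    have hC : xd t = (A + ρ • (B * K)) *ᵥ ξ + D *ᵥ u := by
      funext i
      have hBK : ((B * K) *ᵥ ξ) i = B i 0 * w := by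
        simp only [mulVec, dotProduct, mul_apply, Fin.sum_univ_one, hw]
        rw [Finset.mul_sum]
        apply Finset.sum_congr rfl
        intro j _; ring
      simp only [hxd, Pi.add_apply, add_mulVec, smul_mulVec, Pi.smul_apply,
        smul_eq_mul, hBK, hφw, ← hw]
      ring
    -- affine representation of the quadratic form in ρ
    set z : Fin n ⊕ Fin l → ℝ := Sum.elim ξ u with hz
    set a : ℝ := (A *ᵥ ξ + D *ᵥ u) ⬝ᵥ (P *ᵥ ξ) + ξ ⬝ᵥ P *ᵥ (A *ᵥ ξ + D *ᵥ u)
      + τ * (ξ ⬝ᵥ P *ᵥ ξ) - χ * (u ⬝ᵥ u) with ha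
    set c : ℝ := ((B * K) *ᵥ ξ) ⬝ᵥ (P *ᵥ ξ) + ξ ⬝ᵥ P *ᵥ ((B * K) *ᵥ ξ) with hc
    have haff : ∀ ρ' : ℝ, z ⬝ᵥ (Matrix.fromBlocks
        ((A + ρ' • (B * K))ᵀ * P + P * (A + ρ' • (B * K)) + τ • P)
        (P * D) (Dᵀ * P) ((-χ) • (1 : Matrix (Fin l) (Fin l) ℝ))) *ᵥ z
        = a + ρ' * c := by
      intro ρ'
      rw [hz, qf_block]
      simp only [add_mulVec, smul_mulVec, mulVec_add, mulVec_smul,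
        dotProduct_add, add_dotProduct, smul_dotProduct, dotProduct_smul, smul_eq_mul,
        ha, hc]
      ring
    have hvert0 : a + ρ₀ * c ≤ 0 := by
      rw [← haff ρ₀]
      by_cases hz0 : z = 0
      · rw [hz0]; simp
      · exact le_of_lt (hvertex ρ₀ (Or.inl rfl) z hz0)
    have hvert1 : a + ρ₁ * c ≤ 0 := by
      rw [← haff ρ₁]
      by_cases hz0 : z = 0
      · rw [hz0]; simp
      · exact le_of_lt (hvertex ρ₁ (Or.inr rfl) z hz0)
    have hqf : a + ρ * c ≤ 0 := by
      rcases le_or_gt 0 c with hcp | hcn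
      · nlinarith
      · nlinarith
    have huu : u ⬝ᵥ u ≤ fbar := by
      have := hfb t ht
      simpa [dotProduct, sq] using this
    have hmain : xd t ⬝ᵥ P *ᵥ x t + x t ⬝ᵥ P *ᵥ xd t + τ * V t - χ * (u ⬝ᵥ u)
        = a + ρ * c := by
      rw [← haff ρ, hz, qf_block, hC]
    nlinarith
  -- derivative of V
  have hVd : ∀ t ≥ (0 : ℝ),
      HasDerivAt V (xd t ⬝ᵥ P *ᵥ x t + x t ⬝ᵥ P *ᵥ xd t) t := by
    intro t ht
    exact qf_hasDerivAt P (hx t ht)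
  -- Gronwall via monotonicity
  set cst : ℝ := χ * fbar with hcst
  have hcst0 : 0 ≤ cst := by positivity
  set g : ℝ → ℝ := fun t => (V t - cst / τ) * Real.exp (τ * t) with hg
  have hg' : ∀ t ≥ (0 : ℝ), HasDerivAt g
      ((xd t ⬝ᵥ P *ᵥ x t + x t ⬝ᵥ P *ᵥ xd t + τ * V t - cst) * Real.exp (τ * t)) t := by
    intro t ht
    have h1 : HasDerivAt (fun s => V s - cst / τ)
        (xd t ⬝ᵥ P *ᵥ x t + x t ⬝ᵥ P *ᵥ xd t) t := (hVd t ht).sub_const _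
    have hlin : HasDerivAt (fun s : ℝ => τ * s) τ t := by
      simpa using (hasDerivAt_id t).const_mul τ
    have h2 : HasDerivAt (fun s => Real.exp (τ * s)) (Real.exp (τ * t) * τ) t := hlin.exp
    have := h1.fun_mul h2
    refine this.congr_deriv ?_
    have hτc : cst / τ * τ = cst := div_mul_cancel₀ cst hτ.ne'
    linear_combination (-Real.exp (τ * t)) * hτc
  have hganti : AntitoneOn g (Set.Ici (0 : ℝ)) := by
    apply antitoneOn_of_deriv_nonpos (convex_Ici 0)
    · intro t ht
      exact (hg' t ht).continuousAt.continuousWithinAt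
    · intro t ht
      rw [interior_Ici] at ht
      exact (hg' t (le_of_lt ht)).differentiableAt.differentiableWithinAt
    · intro t ht
      rw [interior_Ici] at ht
      rw [(hg' t (le_of_lt ht)).deriv]
      exact mul_nonpos_of_nonpos_of_nonneg
        (by linarith [hkey t (le_of_lt ht)]) (Real.exp_pos _).le
  have hVbound : ∀ t ≥ (0 : ℝ), V t ≤ cst / τ + (V 0 - cst / τ) * Real.exp (-τ * t) := by
    intro t ht
    have h := hganti (Set.self_mem_Ici) ht ht
    rw [hg] at h
    simp only [mul_zero, Real.exp_zero, mul_one] at h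
    have hE : Real.exp (τ * t) * Real.exp (-τ * t) = 1 := by
      rw [← Real.exp_add]; ring_nf; exact Real.exp_zero
    have h2 := mul_le_mul_of_nonneg_right h (Real.exp_pos (-τ * t)).le
    rw [mul_assoc, hE, mul_one] at h2
    linarith
  have hV0 : V 0 ≤ opNorm P * _root_.enorm (x 0) ^ 2 := qf_le_opNorm P (x 0)
  have hfirst : ∀ t ≥ (0 : ℝ),
      x t ⬝ᵥ P *ᵥ x t ≤ χ * fbar / τ +
        (opNorm P * (_root_.enorm (x 0)) ^ 2 + χ * fbar / τ) * Real.exp (-τ * t) := by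
    intro t ht
    have h := hVbound t ht
    have hE := Real.exp_pos (-τ * t)
    have hc : 0 ≤ cst / τ := by positivity
    nlinarith
  refine ⟨hfirst, ?_⟩
  -- limsup bound
  have hγle : ∀ ξ : Fin n → ℝ, γ * (∑ i, ξ i ^ 2) ≤ ξ ⬝ᵥ P *ᵥ ξ := by
    intro ξ
    by_cases hξ : ξ = 0
    · rw [hξ]; simp
    · have h := hPγ ξ hξ
      have hexp : ξ ⬝ᵥ (P - γ • (1 : Matrix (Fin n) (Fin n) ℝ)) *ᵥ ξ
          = ξ ⬝ᵥ P *ᵥ ξ - γ * (∑ i, ξ i ^ 2) := by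
        rw [Matrix.sub_mulVec, dotProduct_sub, smul_mulVec, one_mulVec,
          dotProduct_smul]
        simp [dotProduct, sq, Finset.mul_sum]
      rw [hexp] at h
      linarith
  apply le_of_forall_gt_imp_ge_of_dense
  intro b hb
  have hb0 : 0 < b := lt_of_le_of_lt (Real.sqrt_nonneg _) hb
  have harg : 0 ≤ χ * fbar / (γ * τ) := by positivity
  have hb2 : χ * fbar / (γ * τ) < b ^ 2 := by
    rw [← Real.sq_sqrt harg]
    exact pow_lt_pow_left₀ hb (Real.sqrt_nonneg _) two_ne_zero
  set Cb : ℝ := opNorm P * _root_.enorm (x 0) ^ 2 + χ * fbar / τ with hCb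
  have htend : Tendsto (fun t : ℝ => (χ * fbar / τ + Cb * Real.exp (-τ * t)) / γ)
      atTop (nhds ((χ * fbar / τ + Cb * 0) / γ)) := by
    apply Tendsto.div_const
    apply Tendsto.const_add
    apply Tendsto.const_mul
    apply Real.tendsto_exp_atBot.comp
    exact (tendsto_const_mul_atBot_of_neg (by linarith)).mpr tendsto_id
  have hlim_eq : (χ * fbar / τ + Cb * 0) / γ = χ * fbar / (γ * τ) := by
    rw [mul_zero, add_zero, div_div, mul_comm τ γ]
  rw [hlim_eq] at htend
  have hev : ∀ᶠ t in atTop, _root_.enorm (x t) ≤ b := by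
    filter_upwards [htend.eventually_lt_const hb2, eventually_ge_atTop (0 : ℝ)]
      with t hlt ht
    have h1 := hγle (x t)
    have h2 := hfirst t ht
    have hS : ∑ i, x t i ^ 2 ≤ b ^ 2 := by
      have : γ * (∑ i, x t i ^ 2) ≤ χ * fbar / τ + Cb * Real.exp (-τ * t) := by
        calc γ * (∑ i, x t i ^ 2) ≤ x t ⬝ᵥ P *ᵥ x t := h1
          _ ≤ _ := h2
      have h3 : χ * fbar / τ + Cb * Real.exp (-τ * t) < b ^ 2 * γ :=
        (div_lt_iff₀ hγ).1 hlt
      have h4 : γ * (∑ i, x t i ^ 2) < γ * b ^ 2 := by nlinarith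
      exact le_of_lt (lt_of_mul_lt_mul_left h4 hγ.le)
    calc _root_.enorm (x t) = Real.sqrt (∑ i, x t i ^ 2) := rfl
      _ ≤ Real.sqrt (b ^ 2) := Real.sqrt_le_sqrt hS
      _ = b := by rw [Real.sqrt_sq hb0.le]
  exact limsup_le_of_le (isCoboundedUnder_le_of_le atTop
    (fun t => Real.sqrt_nonneg _)) hev
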